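/- Let k be odd. Every weighted graph G of order n ≥ k admits a k-partition (X₁,…,X_k) with w(X₁,…,X_k) ≥ ((k−1)/k)·w(G) + ((k−1)/(2k))·(1 − (k−3)/(4(n−1)))·d_w(G). In particular, for k = 3 the lower-order correction vanishes and the bound is (2/3)·w(G) + d_w(G)/3. -/

import Mathlib

open Finset

/-- Total weight of the graph: half the sum of `w u v` over ordered pairs. -/
noncomputable def totalW {V : Type} [Fintype V] (w : V → V → ℝ) : ℝ := (∑ u, ∑ v, w u v) / 2

/-- Weight of the cut between `X` and `Y`. -/
noncomputable def cutW {V : Type} (w : V → V → ℝ) (X Y : Finset V) : ℝ := ∑ u ∈ X, ∑ v ∈ Y, w u v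

/-- Weight of the edges inside `S`. -/
noncomputable def insideW {V : Type} (w : V → V → ℝ) (S : Finset V) : ℝ := (∑ u ∈ S, ∑ v ∈ S, w u v) / 2

/-- Weighted degree of a vertex. -/
noncomputable def wdeg {V : Type} [Fintype V] (w : V → V → ℝ) (v : V) : ℝ := ∑ u, w v u

/-- Maximum weighted degree. -/
noncomputable def maxDeg {V : Type} [Fintype V] (w : V → V → ℝ) : ℝ := ⨆ v, wdeg w v

/-- Weight from `v` into the set `S`. -/
noncomputable def wS {V : Type} (w : V → V → ℝ) (S : Finset V) (v : V) : ℝ := ∑ x ∈ S, w v x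

/-- Total cross-part weight of a `k`-partition. -/
noncomputable def kcutW {V : Type} (w : V → V → ℝ) {k : ℕ} (X : Fin k → Finset V) : ℝ :=
  (∑ i, ∑ j, if i = j then 0 else cutW w (X i) (X j)) / 2

/-- `X` is a partition of `V` into `k` nonempty pairwise disjoint parts. -/
def IsPartition {V : Type} {k : ℕ} (X : Fin k → Finset V) : Prop :=
  (∀ i, (X i).Nonempty) ∧ (∀ i j, i ≠ j → Disjoint (X i) (X j)) ∧ (∀ v, ∃ i, v ∈ X i)

/- ---------------- Auxiliary lemmas ---------------- -/

set_option linter.unusedSectionVars false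

section Aux

variable {V : Type} [Fintype V] [DecidableEq V]

/-- There is a permutation sending any given pair of distinct points to
any other given pair of distinct points. -/
lemma aux_exists_perm_pair {u v u' v' : V} (huv : u ≠ v) (h' : u' ≠ v') :
    ∃ τ : Equiv.Perm V, τ u' = u ∧ τ v' = v := by
  classical
  set t : V := Equiv.swap u u' v' with ht
  have htu : t ≠ u := by
    rw [ht]
    by_cases h1 : v' = u
    · rw [h1, Equiv.swap_apply_left]
      intro h2
      exact h' (h2.trans h1.symm)
    · by_cases h2 : v' = u'
      · exact absurd h2.symm h'
      · rw [Equiv.swap_apply_of_ne_of_ne h1 h2]; exact h1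
  refine ⟨(Equiv.swap v t) * (Equiv.swap u u'), ?_, ?_⟩
  · have hswap : (Equiv.swap u u') u' = u := Equiv.swap_apply_right u u'
    rw [Equiv.Perm.mul_apply, hswap, Equiv.swap_apply_of_ne_of_ne huv (Ne.symm htu)]
  · rw [Equiv.Perm.mul_apply, ← ht, Equiv.swap_apply_right]

lemma aux_sum_perm_pair (F : V → V → ℝ) {u v u' v' : V} (huv : u ≠ v) (h' : u' ≠ v') :
    ∑ σ : Equiv.Perm V, F (σ u) (σ v) = ∑ σ : Equiv.Perm V, F (σ u') (σ v') := by
  classical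
  obtain ⟨τ, h1, h2⟩ := aux_exists_perm_pair huv h'
  calc ∑ σ : Equiv.Perm V, F (σ u) (σ v)
      = ∑ σ : Equiv.Perm V, F ((σ * τ) u') ((σ * τ) v') := by
        simp only [Equiv.Perm.mul_apply, h1, h2]
    _ = ∑ σ : Equiv.Perm V, F (σ u') (σ v') :=
        Fintype.sum_equiv (Equiv.mulRight τ) _ _ (fun σ => rfl)

lemma aux_sum_perm_offDiag (F : V → V → ℝ) {u v : V} (huv : u ≠ v) :
    ((Fintype.card V : ℝ) * ((Fintype.card V : ℝ) - 1)) * ∑ σ : Equiv.Perm V, F (σ u) (σ v)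
      = (Nat.factorial (Fintype.card V) : ℝ) * ∑ p ∈ (univ : Finset V).offDiag, F p.1 p.2 := by
  classical
  have hpos : 0 < Fintype.card V := Fintype.card_pos_iff.2 ⟨u⟩
  have hcard : ((univ : Finset V).offDiag.card : ℝ)
      = (Fintype.card V : ℝ) * ((Fintype.card V : ℝ) - 1) := by
    rw [Finset.offDiag_card, Finset.card_univ]
    have hle : Fintype.card V ≤ Fintype.card V * Fintype.card V :=
      Nat.le_mul_of_pos_left _ hpos
    push_cast [Nat.cast_sub hle]
    ring
  have h1 : ∑ p ∈ (univ : Finset V).offDiag, (∑ σ : Equiv.Perm V, F (σ p.1) (σ p.2))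
      = ((univ : Finset V).offDiag.card : ℝ) * ∑ σ : Equiv.Perm V, F (σ u) (σ v) := by
    rw [Finset.sum_congr rfl (fun p hp => ?_), Finset.sum_const, nsmul_eq_mul]
    obtain ⟨-, -, hne⟩ := Finset.mem_offDiag.1 hp
    exact aux_sum_perm_pair F hne huv
  have h2 : ∀ σ : Equiv.Perm V, ∑ p ∈ (univ : Finset V).offDiag, F (σ p.1) (σ p.2)
      = ∑ p ∈ (univ : Finset V).offDiag, F p.1 p.2 := by
    intro σ
    refine Finset.sum_equiv (Equiv.prodCongr σ σ) (fun p => ?_) (fun p _ => rfl)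
    simp [Finset.mem_offDiag, σ.injective.ne_iff]
  have h3 : ∑ p ∈ (univ : Finset V).offDiag, (∑ σ : Equiv.Perm V, F (σ p.1) (σ p.2))
      = ∑ σ : Equiv.Perm V, ∑ p ∈ (univ : Finset V).offDiag, F p.1 p.2 := by
    rw [Finset.sum_comm]
    exact Finset.sum_congr rfl (fun σ _ => h2 σ)
  rw [← hcard, ← h1, h3, Finset.sum_const, Finset.card_univ, Fintype.card_perm, nsmul_eq_mul]

lemma aux_sum4_comm {α β : Type} [Fintype α] [Fintype β] (f : α → α → β → β → ℝ) :
    ∑ i : α, ∑ j : α, ∑ u : β, ∑ v : β, f i j u v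
      = ∑ u : β, ∑ v : β, ∑ i : α, ∑ j : α, f i j u v := by
  calc ∑ i : α, ∑ j : α, ∑ u : β, ∑ v : β, f i j u v
      = ∑ i : α, ∑ u : β, ∑ j : α, ∑ v : β, f i j u v :=
        Finset.sum_congr rfl (fun i _ => Finset.sum_comm)
    _ = ∑ u : β, ∑ i : α, ∑ j : α, ∑ v : β, f i j u v := Finset.sum_comm
    _ = ∑ u : β, ∑ i : α, ∑ v : β, ∑ j : α, f i j u v :=
        Finset.sum_congr rfl (fun u _ => Finset.sum_congr rfl (fun i _ => Finset.sum_comm))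
    _ = ∑ u : β, ∑ v : β, ∑ i : α, ∑ j : α, f i j u v :=
        Finset.sum_congr rfl (fun u _ => Finset.sum_comm)

/-- cut value of a partition given by fibers of a coloring -/
lemma aux_kcut_eq (w : V → V → ℝ) {k : ℕ} (c : V → Fin k) :
    kcutW w (fun i => univ.filter (fun v => c v = i)) =
      totalW w - (∑ u, ∑ v, if c u = c v then w u v else 0) / 2 := by
  classical
  have h1 : ∀ i j : Fin k, (if i = j then (0:ℝ) else
      cutW w (univ.filter (fun v => c v = i)) (univ.filter (fun v => c v = j)))
      = ∑ u, ∑ v, (if c u = i then (if c v = j then (if i = j then 0 else w u v) else 0) else 0) := by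
    intro i j
    by_cases h : i = j
    · subst h; simp
    · rw [if_neg h]
      unfold cutW
      rw [Finset.sum_filter]
      refine Finset.sum_congr rfl (fun u _ => ?_)
      by_cases hu : c u = i
      · rw [if_pos hu, Finset.sum_filter]
        refine Finset.sum_congr rfl (fun v _ => ?_)
        rw [if_pos hu, if_neg h]
      · rw [if_neg hu]
        simp [hu]
  have key2 : ∀ u v : V,
      (∑ i : Fin k, ∑ j : Fin k,
        if c u = i then (if c v = j then (if i = j then (0:ℝ) else w u v) else 0) else 0)
      = w u v - if c u = c v then w u v else 0 := by
    intro u v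
    have step1 : ∀ i : Fin k,
        (∑ j : Fin k, if c u = i then (if c v = j then (if i = j then (0:ℝ) else w u v) else 0) else 0)
        = if c u = i then (if i = c v then (0:ℝ) else w u v) else 0 := by
      intro i
      by_cases hi : c u = i
      · simp only [hi, if_true, eq_self_iff_true]
        rw [Finset.sum_ite_eq univ (c v) (fun j => if i = j then (0:ℝ) else w u v)]
        simp
      · simp [hi]
    calc (∑ i : Fin k, ∑ j : Fin k,
        if c u = i then (if c v = j then (if i = j then (0:ℝ) else w u v) else 0) else 0)
        = ∑ i : Fin k, (if c u = i then (if i = c v then (0:ℝ) else w u v) else 0) :=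
          Finset.sum_congr rfl (fun i _ => step1 i)
      _ = if c u = c v then (0:ℝ) else w u v := by
          rw [Finset.sum_ite_eq univ (c u) (fun i => if i = c v then (0:ℝ) else w u v)]
          simp
      _ = w u v - if c u = c v then w u v else 0 := by
          by_cases h : c u = c v <;> simp [h]
  have key : (∑ i : Fin k, ∑ j : Fin k, if i = j then (0:ℝ) else
      cutW w (univ.filter (fun v => c v = i)) (univ.filter (fun v => c v = j)))
      = ∑ u, ∑ v, (w u v - if c u = c v then w u v else 0) :=
    calc (∑ i : Fin k, ∑ j : Fin k, if i = j then (0:ℝ) else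
        cutW w (univ.filter (fun v => c v = i)) (univ.filter (fun v => c v = j)))
        = ∑ i : Fin k, ∑ j : Fin k, ∑ u, ∑ v,
            (if c u = i then (if c v = j then (if i = j then (0:ℝ) else w u v) else 0) else 0) :=
          Finset.sum_congr rfl (fun i _ => Finset.sum_congr rfl (fun j _ => h1 i j))
      _ = ∑ u, ∑ v, ∑ i : Fin k, ∑ j : Fin k,
            (if c u = i then (if c v = j then (if i = j then (0:ℝ) else w u v) else 0) else 0) :=
          aux_sum4_comm _
      _ = ∑ u, ∑ v, (w u v - if c u = c v then w u v else 0) :=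
          Finset.sum_congr rfl (fun u _ => Finset.sum_congr rfl (fun v _ => key2 u v))
  unfold kcutW totalW
  rw [key]
  rw [Finset.sum_congr rfl (fun u (_ : u ∈ univ) => Finset.sum_sub_distrib
      (f := fun v => w u v) (g := fun v => if c u = c v then w u v else 0)),
    Finset.sum_sub_distrib, sub_div]

/-- the nat interval successor lemma -/
lemma aux_off_succ (q r i : ℕ) :
    q * (i+1) + min (i+1) r = (q * i + min i r) + (q + if i < r then 1 else 0) := by
  rcases lt_or_ge i r with h | h
  · rw [if_pos h, Nat.mul_succ]; omega
  · rw [if_neg (not_lt.2 h), Nat.mul_succ]; omega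

lemma aux_off_mono (q r : ℕ) {a b : ℕ} (h : a ≤ b) :
    q * a + min a r ≤ q * b + min b r :=
  Nat.add_le_add (Nat.mul_le_mul_left q h) (min_le_min h (le_refl r))

lemma aux_cover (k q r n : ℕ) (hk : 0 < k) (hn : n = k * q + r) (hr : r < k) :
    ∀ x < n, ∃ i, i < k ∧ (q * i + min i r ≤ x ∧
      x < q * i + min i r + (q + if i < r then 1 else 0)) := by
  intro x hx
  classical
  set F := (Finset.range k).filter (fun i => q * i + min i r ≤ x) with hF
  have h0 : 0 ∈ F := by simp [hF, hk]
  have hne : F.Nonempty := ⟨0, h0⟩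
  set i := F.max' hne with hi
  have hiF : i ∈ F := F.max'_mem hne
  rw [hF, Finset.mem_filter, Finset.mem_range] at hiF
  refine ⟨i, hiF.1, hiF.2, ?_⟩
  by_contra hcon
  push_neg at hcon
  have hsucc : q * (i+1) + min (i+1) r ≤ x := by rw [aux_off_succ]; exact hcon
  rcases Nat.lt_or_ge (i+1) k with h1 | h1
  · have hmem : i + 1 ∈ F := by
      rw [hF, Finset.mem_filter, Finset.mem_range]; exact ⟨h1, hsucc⟩
    exact Nat.not_succ_le_self i (F.le_max' _ hmem)
  · have hik : i + 1 = k := by omega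
    have hkval : q * (i+1) + min (i+1) r = n := by
      rw [hik, hn, Nat.min_eq_right hr.le, Nat.mul_comm]
    rw [hkval] at hsucc
    omega

lemma aux_card_filter_equiv {W : Type} [Fintype W] [DecidableEq W] (e : V ≃ W)
    (p : W → Prop) [DecidablePred p] :
    ((univ : Finset V).filter (fun v => p (e v))).card = ((univ : Finset W).filter p).card :=
  Finset.card_equiv e (by simp)

lemma aux_card_val_interval (n a b : ℕ) (hb : b ≤ n) :
    (((univ : Finset (Fin n))).filter (fun x => a ≤ x.val ∧ x.val < b)).card = b - a := by
  have hset : ((univ : Finset (Fin n))).filter (fun x => a ≤ x.val ∧ x.val < b)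
      = (Finset.Ico a b).attachFin (fun m hm => lt_of_lt_of_le (Finset.mem_Ico.mp hm).2 hb) := by
    ext x
    simp [Finset.mem_attachFin, Finset.mem_Ico]
  rw [hset, Finset.card_attachFin, Nat.card_Ico]

end Aux

/- ---------------- Averaged partition lemma ---------------- -/

lemma exists_good_partition {V : Type} [Fintype V] [DecidableEq V] (w : V → V → ℝ)
    (hdiag : ∀ v, w v v = 0) {k : ℕ} (col : V → Fin k)
    (hfib : ∀ i, ((univ : Finset V).filter (fun v => col v = i)).Nonempty)
    (hn2 : 2 ≤ Fintype.card V) :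
    ∃ X : Fin k → Finset V, IsPartition X ∧
      totalW w - (∑ p ∈ (univ : Finset V).offDiag, if col p.1 = col p.2 then (1:ℝ) else 0)
            / ((Fintype.card V : ℝ) * ((Fintype.card V : ℝ) - 1)) * totalW w ≤ kcutW w X := by
  classical
  have hnn1 : (0:ℝ) < (Fintype.card V : ℝ) * ((Fintype.card V : ℝ) - 1) := by
    have : (2:ℝ) ≤ (Fintype.card V : ℝ) := by exact_mod_cast hn2
    nlinarith
  set SG : ℝ := ∑ p ∈ (univ : Finset V).offDiag, if col p.1 = col p.2 then (1:ℝ) else 0 with hSG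
  set C : ℝ := SG / ((Fintype.card V : ℝ) * ((Fintype.card V : ℝ) - 1)) with hC
  -- average of the same-part indicator over permutations
  have hperm : ∀ u v : V, u ≠ v →
      ∑ σ : Equiv.Perm V, (if col (σ u) = col (σ v) then (1:ℝ) else 0)
        = (Nat.factorial (Fintype.card V) : ℝ) * C := by
    intro u v huv
    have h := aux_sum_perm_offDiag (fun a b => if col a = col b then (1:ℝ) else 0) huv
    rw [← hSG] at h
    have hD : ((Fintype.card V : ℝ) * ((Fintype.card V : ℝ) - 1)) ≠ 0 := ne_of_gt hnn1
    rw [hC, ← mul_div_assoc, eq_div_iff hD]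
    linear_combination h
  -- the average of the same-part weight
  have havg : ∑ σ : Equiv.Perm V, (∑ u, ∑ v, if col (σ u) = col (σ v) then w u v else 0)
      = (Nat.factorial (Fintype.card V) : ℝ) * (C * (2 * totalW w)) := by
    have hterm : ∀ u v : V, (∑ σ : Equiv.Perm V, if col (σ u) = col (σ v) then w u v else 0)
        = w u v * ((Nat.factorial (Fintype.card V) : ℝ) * C) := by
      intro u v
      rcases eq_or_ne u v with rfl | huv
      · simp [hdiag]
      · have hh : ∀ σ : Equiv.Perm V, (if col (σ u) = col (σ v) then w u v else 0)
            = w u v * (if col (σ u) = col (σ v) then (1:ℝ) else 0) := by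
          intro σ; simp only [mul_ite, mul_one, mul_zero]
        calc ∑ σ : Equiv.Perm V, (if col (σ u) = col (σ v) then w u v else 0)
            = ∑ σ : Equiv.Perm V, w u v * (if col (σ u) = col (σ v) then (1:ℝ) else 0) :=
              Finset.sum_congr rfl (fun σ _ => hh σ)
          _ = w u v * ∑ σ : Equiv.Perm V, (if col (σ u) = col (σ v) then (1:ℝ) else 0) :=
              (Finset.mul_sum _ _ _).symm
          _ = w u v * ((Nat.factorial (Fintype.card V) : ℝ) * C) := by rw [hperm u v huv]
    calc ∑ σ : Equiv.Perm V, (∑ u, ∑ v, if col (σ u) = col (σ v) then w u v else 0)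
        = ∑ u, ∑ v, ∑ σ : Equiv.Perm V, (if col (σ u) = col (σ v) then w u v else 0) := by
          rw [Finset.sum_comm]
          exact Finset.sum_congr rfl (fun u _ => Finset.sum_comm)
      _ = ∑ u, ∑ v, w u v * ((Nat.factorial (Fintype.card V) : ℝ) * C) :=
          Finset.sum_congr rfl (fun u _ => Finset.sum_congr rfl (fun v _ => hterm u v))
      _ = (∑ u, ∑ v, w u v) * ((Nat.factorial (Fintype.card V) : ℝ) * C) := by
          rw [Finset.sum_mul]
          exact Finset.sum_congr rfl (fun u _ => by rw [Finset.sum_mul])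
      _ = (Nat.factorial (Fintype.card V) : ℝ) * (C * (2 * totalW w)) := by
          unfold totalW; ring
  -- pick a permutation achieving at most the average
  have hex : ∃ σ : Equiv.Perm V,
      (∑ u, ∑ v, if col (σ u) = col (σ v) then w u v else 0) ≤ C * (2 * totalW w) := by
    have hne : (univ : Finset (Equiv.Perm V)).Nonempty := ⟨1, Finset.mem_univ 1⟩
    have hle : ∑ σ : Equiv.Perm V, (∑ u, ∑ v, if col (σ u) = col (σ v) then w u v else 0)
        ≤ ∑ _σ : Equiv.Perm V, C * (2 * totalW w) := by
      rw [havg, Finset.sum_const, Finset.card_univ, Fintype.card_perm, nsmul_eq_mul]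
    obtain ⟨σ, -, hσ⟩ := Finset.exists_le_of_sum_le hne hle
    exact ⟨σ, hσ⟩
  obtain ⟨σ, hσ⟩ := hex
  refine ⟨fun i => univ.filter (fun v => col (σ v) = i), ⟨?_, ?_, ?_⟩, ?_⟩
  · intro i
    rw [← Finset.card_pos, aux_card_filter_equiv σ (fun v => col v = i)]
    exact Finset.card_pos.2 (hfib i)
  · intro i j hij
    rw [Finset.disjoint_left]
    intro a ha hb
    rw [Finset.mem_filter] at ha hb
    exact hij (ha.2 ▸ hb.2 ▸ rfl)
  · intro v
    exact ⟨col (σ v), by simp⟩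
  · rw [aux_kcut_eq w (fun v => col (σ v))]
    have hcc : C * (2 * totalW w) = 2 * (C * totalW w) := by ring
    linarith [hσ, hcc]

theorem stmt12 (k : ℕ) (hko : Odd k) (hk : 3 ≤ k) (V : Type) [Fintype V] [DecidableEq V]
    (hcard : k ≤ Fintype.card V) (w : V → V → ℝ)
    (hsym : ∀ u v, w u v = w v u) (hnn : ∀ u v, 0 ≤ w u v) (hdiag : ∀ v, w v v = 0) :
    ∃ X : Fin k → Finset V, IsPartition X ∧
      kcutW w X ≥ ((k : ℝ) - 1) / k * totalW w +
        ((k : ℝ) - 1) / (2 * k) *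
          (1 - ((k : ℝ) - 3) / (4 * ((Fintype.card V : ℝ) - 1))) *
          (2 * totalW w / (Fintype.card V : ℝ)) := by
  classical
  have hk0 : 0 < k := by omega
  have hn3 : 3 ≤ Fintype.card V := le_trans hk hcard
  set n := Fintype.card V with hn
  set q := n / k with hq
  set r := n % k with hr
  have hnqr : n = k * q + r := by rw [hq, hr]; exact (Nat.div_add_mod n k).symm
  have hrk : r < k := Nat.mod_lt _ hk0
  have hq1 : 1 ≤ q := (Nat.one_le_div_iff hk0).2 hcard
  set e : V ≃ Fin n := Fintype.equivFin V with he
  set off : ℕ → ℕ := fun i => q * i + min i r with hoff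
  set s : ℕ → ℕ := fun i => q + if i < r then 1 else 0 with hs
  have hoffsucc : ∀ i : ℕ, off (i+1) = off i + s i := by
    intro i; exact aux_off_succ q r i
  have hbound : ∀ i, i < k → off i + s i ≤ n := by
    intro i hik
    have h2 : off (i+1) ≤ off k := aux_off_mono q r hik
    have h3 : off k = n := by
      show q * k + min k r = n
      rw [Nat.min_eq_right hrk.le, hnqr, Nat.mul_comm]
    rw [hoffsucc] at h2
    omega
  set Y : Fin k → Finset V := fun i =>
    univ.filter (fun v => off i.val ≤ (e v).val ∧ (e v).val < off i.val + s i.val) with hY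
  have hYcard : ∀ i, (Y i).card = s i.val := by
    intro i
    rw [hY]
    rw [aux_card_filter_equiv e (fun x => off i.val ≤ x.val ∧ x.val < off i.val + s i.val),
      aux_card_val_interval n (off i.val) (off i.val + s i.val) (hbound i.val i.isLt)]
    omega
  have hoffle : ∀ a b : ℕ, a < b → off a + s a ≤ off b := by
    intro a b hab
    have h2 : off (a+1) ≤ off b := aux_off_mono q r hab
    rw [hoffsucc] at h2
    exact h2
  have hYdis : ∀ i j : Fin k, i ≠ j → Disjoint (Y i) (Y j) := by
    intro i j hij
    rw [Finset.disjoint_left]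
    intro a ha hb
    rw [hY, Finset.mem_filter] at ha hb
    rcases lt_trichotomy i.val j.val with h | h | h
    · have := hoffle i.val j.val h; omega
    · exact hij (Fin.ext h)
    · have := hoffle j.val i.val h; omega
  have hYcov : ∀ v, ∃ i, v ∈ Y i := by
    intro v
    obtain ⟨i, hik, h1, h2⟩ := aux_cover k q r n hk0 hnqr hrk (e v).val (e v).isLt
    refine ⟨⟨i, hik⟩, ?_⟩
    rw [hY, Finset.mem_filter]
    exact ⟨mem_univ v, h1, h2⟩
  have hEU : ∀ v : V, ∃! i, i ∈ (univ : Finset (Fin k)) ∧ v ∈ Y i := by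
    intro v
    obtain ⟨i, hi⟩ := hYcov v
    refine ⟨i, ⟨mem_univ i, hi⟩, ?_⟩
    rintro j ⟨-, hj⟩
    by_contra hne
    exact (Finset.disjoint_left.1 (hYdis j i hne) hj) hi
  set col : V → Fin k := fun v => Finset.choose (fun i => v ∈ Y i) univ (hEU v) with hcol
  have hcolY : ∀ v, v ∈ Y (col v) := fun v => Finset.choose_property _ _ (hEU v)
  have hcoluniq : ∀ v i, v ∈ Y i → col v = i := by
    intro v i hvi
    by_contra hne
    exact (Finset.disjoint_left.1 (hYdis _ _ hne) (hcolY v)) hvi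
  have hYeq : ∀ i, Y i = univ.filter (fun v => col v = i) := by
    intro i
    ext v
    simp only [Finset.mem_filter, mem_univ, true_and]
    constructor
    · exact hcoluniq v i
    · rintro rfl; exact hcolY v
  have hfibcard : ∀ i, ((univ : Finset V).filter (fun v => col v = i)).card = s i.val := by
    intro i; rw [← hYeq, hYcard]
  have hfib : ∀ i, ((univ : Finset V).filter (fun v => col v = i)).Nonempty := by
    intro i
    rw [← Finset.card_pos, hfibcard]
    show 0 < q + if (i : ℕ) < r then 1 else 0
    split_ifs <;> omega
  -- value of the off-diagonal same-colour count
  have hGfull : ∑ a : V, ∑ b : V, (if col a = col b then (1:ℝ) else 0)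
      = ∑ i : Fin k, ((s i.val : ℝ) * (s i.val : ℝ)) := by
    have hrow : ∀ a : V, ∑ b : V, (if col a = col b then (1:ℝ) else 0)
        = (s (col a).val : ℝ) := by
      intro a
      rw [Finset.sum_boole]
      have hfe : (univ.filter (fun b => col a = col b)) = (univ.filter (fun b => col b = col a)) := by
        ext b; simp [eq_comm]
      rw [hfe, hfibcard]
    calc ∑ a : V, ∑ b : V, (if col a = col b then (1:ℝ) else 0)
        = ∑ a : V, (s (col a).val : ℝ) := Finset.sum_congr rfl (fun a _ => hrow a)
      _ = ∑ i : Fin k, ∑ _a ∈ univ.filter (fun v => col v = i), (s i.val : ℝ) :=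
          (Finset.sum_fiberwise' (univ : Finset V) col (fun i => (s i.val : ℝ))).symm
      _ = ∑ i : Fin k, ((s i.val : ℝ) * (s i.val : ℝ)) := by
          refine Finset.sum_congr rfl (fun i _ => ?_)
          rw [Finset.sum_const, hfibcard, nsmul_eq_mul]
  have hGdiagsum : ∑ p ∈ (univ : Finset V).diag, (if col p.1 = col p.2 then (1:ℝ) else 0)
      = (n : ℝ) := by
    have hd : ∑ p ∈ (univ : Finset V).diag, (if col p.1 = col p.2 then (1:ℝ) else 0)
        = ∑ _a : V, (1:ℝ) := by
      refine Finset.sum_nbij' (fun p => p.1) (fun a => (a, a)) ?_ ?_ ?_ ?_ ?_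
      · intro p _; exact mem_univ _
      · intro a _; simp [Finset.mem_diag]
      · intro p hp
        rw [Finset.mem_diag] at hp
        simp [Prod.ext_iff, hp.2]
      · intro a _; rfl
      · intro p hp
        rw [Finset.mem_diag] at hp
        simp [← hp.2]
    rw [hd, Finset.sum_const, Finset.card_univ, nsmul_eq_mul, mul_one, hn]
  have hSGval : (∑ p ∈ (univ : Finset V).offDiag, if col p.1 = col p.2 then (1:ℝ) else 0)
      = ∑ i : Fin k, ((s i.val : ℝ) * (s i.val : ℝ)) - (n : ℝ) := by
    have hunion : ∑ p ∈ (univ : Finset V).diag, (if col p.1 = col p.2 then (1:ℝ) else 0)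
        + ∑ p ∈ (univ : Finset V).offDiag, (if col p.1 = col p.2 then (1:ℝ) else 0)
        = ∑ p ∈ (univ : Finset V) ×ˢ (univ : Finset V),
            (if col p.1 = col p.2 then (1:ℝ) else 0) := by
      rw [← Finset.sum_union (Finset.disjoint_diag_offDiag _), Finset.diag_union_offDiag]
    rw [Finset.sum_product] at hunion
    rw [hGdiagsum, hGfull] at hunion
    linarith
  -- the sum of squares of part sizes
  have hsq : ∑ i : Fin k, ((s i.val : ℝ) * (s i.val : ℝ))
      = (r : ℝ) * ((q:ℝ)+1) * ((q:ℝ)+1) + ((k:ℝ) - (r:ℝ)) * (q:ℝ) * (q:ℝ) := by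
    have hnat : ∑ i ∈ Finset.range k, (s i * s i)
        = r * ((q+1) * (q+1)) + (k - r) * (q * q) := by
      have hterm : ∀ i, s i * s i = if i < r then (q+1)*(q+1) else q*q := by
        intro i
        show (q + if i < r then 1 else 0) * (q + if i < r then 1 else 0) = _
        by_cases h : i < r <;> simp [h] <;> ring
      rw [Finset.sum_congr rfl (fun i _ => hterm i), Finset.sum_ite, Finset.sum_const,
        Finset.sum_const]
      have hc1 : ((Finset.range k).filter (fun i => i < r)).card = r := by
        have hre : (Finset.range k).filter (fun i => i < r) = Finset.range r := by
          ext i; simp only [Finset.mem_filter, Finset.mem_range]; omega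
        rw [hre, Finset.card_range]
      have hc2 : ((Finset.range k).filter (fun i => ¬ i < r)).card = k - r := by
        have hh := Finset.card_filter_add_card_filter_not
          (s := Finset.range k) (p := fun i => i < r)
        rw [Finset.card_range] at hh
        omega
      rw [hc1, hc2, smul_eq_mul, smul_eq_mul]
    have hcast : ∑ i : Fin k, ((s i.val : ℝ) * (s i.val : ℝ))
        = ((∑ i ∈ Finset.range k, s i * s i : ℕ) : ℝ) := by
      push_cast
      rw [← Fin.sum_univ_eq_sum_range (fun i => ((s i : ℝ) * (s i : ℝ)))]
    rw [hcast, hnat]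
    push_cast [Nat.cast_sub hrk.le]
    ring
  -- apply the averaged partition lemma
  obtain ⟨X, hpart, hge⟩ := exists_good_partition w hdiag col hfib (by omega)
  rw [hSGval, hsq] at hge
  refine ⟨X, hpart, ?_⟩
  rw [ge_iff_le]
  refine le_trans ?_ hge
  -- numeric bookkeeping
  set W := totalW w with hW
  have hW0 : 0 ≤ W := by
    rw [hW]
    unfold totalW
    apply div_nonneg _ (by norm_num)
    exact Finset.sum_nonneg (fun u _ => Finset.sum_nonneg (fun v _ => hnn u v))
  set K : ℝ := (k : ℝ) with hK
  set N : ℝ := (n : ℝ) with hN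
  set Q : ℝ := (q : ℝ) with hQ
  set R : ℝ := (r : ℝ) with hR
  have hNKQR : N = K * Q + R := by rw [hN, hK, hQ, hR, hnqr]; push_cast; ring
  have hK3 : (3:ℝ) ≤ K := by rw [hK]; exact_mod_cast hk
  have hN3 : (3:ℝ) ≤ N := by rw [hN]; exact_mod_cast hn3
  have hQ1 : (1:ℝ) ≤ Q := by rw [hQ]; exact_mod_cast hq1
  have hR0 : (0:ℝ) ≤ R := by rw [hR]; exact_mod_cast Nat.zero_le r
  have hNpos : (0:ℝ) < N := by linarith
  have hN1pos : (0:ℝ) < N - 1 := by linarith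
  have hKpos : (0:ℝ) < K := by linarith
  set SG : ℝ := R * (Q+1) * (Q+1) + (K - R) * Q * Q - N with hSGv
  -- the key inequality
  have hodd : ((k:ℤ) - 2 * r) ≠ 0 := by
    obtain ⟨m, hm⟩ := hko
    omega
  have hsq1 : (1:ℝ) ≤ (K - 2*R)^2 := by
    have h1 : (1:ℤ) ≤ ((k:ℤ) - 2*r)^2 := by
      rcases lt_or_gt_of_ne hodd with h | h
      · nlinarith
      · nlinarith
    have h2 : ((((k:ℤ) - 2*r)^2 : ℤ) : ℝ) = (K - 2*R)^2 := by
      rw [hK, hR]; push_cast; ring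
    rw [← h2]; exact_mod_cast h1
  have hident : (1 - SG / (N * (N-1)))
      - ((K - 1) / K + (K - 1) / (2*K) * (1 - (K-3)/(4*(N-1))) * (2 / N))
      = ((K - 2*R)^2 - 1) / (4 * K * N * (N-1)) := by
    rw [hSGv]
    have hd1 : N ≠ 0 := ne_of_gt hNpos
    have hd2 : N - 1 ≠ 0 := ne_of_gt hN1pos
    have hd3 : K ≠ 0 := ne_of_gt hKpos
    field_simp
    rw [hNKQR]
    ring
  have hkeyineq : (K - 1) / K + (K - 1) / (2*K) * (1 - (K-3)/(4*(N-1))) * (2 / N)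
      ≤ 1 - SG / (N * (N-1)) := by
    have hpos : (0:ℝ) < 4 * K * N * (N-1) := by positivity
    have hdnn : (0:ℝ) ≤ ((K - 2*R)^2 - 1) / (4 * K * N * (N-1)) :=
      div_nonneg (by linarith) (le_of_lt hpos)
    linarith [hident]
  -- finish
  have hgoal : (K - 1) / K * W + (K - 1) / (2 * K) * (1 - (K - 3) / (4 * (N - 1)))
      * (2 * W / N) ≤ W - SG / (N * (N-1)) * W := by
    have h1 : (K - 1) / K * W + (K - 1) / (2 * K) * (1 - (K - 3) / (4 * (N - 1))) * (2 * W / N)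
        = W * ((K - 1) / K + (K - 1) / (2*K) * (1 - (K-3)/(4*(N-1))) * (2 / N)) := by
      ring
    have h2 : W - SG / (N * (N-1)) * W = W * (1 - SG / (N * (N-1))) := by ring
    rw [h1, h2]
    exact mul_le_mul_of_nonneg_left hkeyineq hW0
  linarith [hgoal]
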